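/- Let M be a real n×n matrix with M + Mᵀ positive definite. Then for any positive diagonal matrix D, every eigenvalue of MD has positive real part. -/

import Mathlib

open Matrix Finset

lemma quad_re {n : ℕ} (A : Matrix (Fin n) (Fin n) ℝ) (x : Fin n → ℂ) :
    (star x ⬝ᵥ ((A.map (fun t : ℝ => (t : ℂ))) *ᵥ x)).re =
      (fun i => (x i).re) ⬝ᵥ A *ᵥ (fun i => (x i).re) +
      (fun i => (x i).im) ⬝ᵥ A *ᵥ (fun i => (x i).im) := by
  simp only [dotProduct, mulVec, Matrix.map_apply, Pi.star_apply, Finset.mul_sum,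
    Complex.re_sum, Complex.mul_re, Complex.mul_im, Complex.conj_re, Complex.conj_im,
    Complex.ofReal_re, Complex.ofReal_im, RCLike.star_def]
  rw [← Finset.sum_add_distrib]
  refine Finset.sum_congr rfl fun i _ => ?_
  rw [← Finset.sum_add_distrib]
  refine Finset.sum_congr rfl fun j _ => ?_
  ring

theorem stmt5 {n : ℕ} (M : Matrix (Fin n) (Fin n) ℝ)
    (hM : (M + Mᵀ).PosDef)
    (d : Fin n → ℝ) (hd : ∀ i, 0 < d i)
    (μ : ℂ) (v : Fin n → ℂ) (hv : v ≠ 0)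
    (heig : ((M * diagonal d).map (fun x : ℝ => (x : ℂ))).mulVec v = μ • v) :
    0 < μ.re := by
  classical
  -- quadratic form of M over ℝ
  have hquad0 : ∀ x : Fin n → ℝ, 0 ≤ x ⬝ᵥ M *ᵥ x := by
    intro x
    rcases eq_or_ne x 0 with rfl | hx
    · simp
    · have h := hM.dotProduct_mulVec_pos hx
      have hsym : x ⬝ᵥ Mᵀ *ᵥ x = x ⬝ᵥ M *ᵥ x := by
        rw [dotProduct_mulVec, vecMul_transpose, dotProduct_comm]
      simp only [add_mulVec, dotProduct_add, hsym, RCLike.re_to_real, star_trivial] at h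
      linarith
  have hquad : ∀ x : Fin n → ℝ, x ≠ 0 → 0 < x ⬝ᵥ M *ᵥ x := by
    intro x hx
    have h := hM.dotProduct_mulVec_pos hx
    have hsym : x ⬝ᵥ Mᵀ *ᵥ x = x ⬝ᵥ M *ᵥ x := by
      rw [dotProduct_mulVec, vecMul_transpose, dotProduct_comm]
    simp only [add_mulVec, dotProduct_add, hsym, RCLike.re_to_real, star_trivial] at h
    linarith
  set w : Fin n → ℂ := fun i => (d i : ℂ) * v i with hw
  have hwne : w ≠ 0 := by
    intro h
    apply hv
    funext i
    have hi := congrFun h i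
    simp only [hw, Pi.zero_apply, mul_eq_zero, Complex.ofReal_eq_zero] at hi
    rcases hi with h1 | h1
    · exact absurd h1 (hd i).ne'
    · exact h1
  -- rewrite eigen equation
  have heq : (M.map (fun t : ℝ => (t : ℂ))) *ᵥ w = μ • v := by
    have h1 : (M * diagonal d).map (fun x : ℝ => (x : ℂ)) =
        M.map (fun t : ℝ => (t : ℂ)) * diagonal (fun i => (d i : ℂ)) := by
      rw [show (fun x : ℝ => (x : ℂ)) = ⇑(algebraMap ℝ ℂ) from rfl, Matrix.map_mul,
        diagonal_map (map_zero _)]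
      rfl
    have h2 : diagonal (fun i => (d i : ℂ)) *ᵥ v = w := by
      funext i
      simp [mulVec_diagonal, hw]
    rw [h1, ← Matrix.mulVec_mulVec, h2] at heig
    exact heig
  -- q = μ * t
  have hsw : star w ⬝ᵥ v = ((∑ i, d i * Complex.normSq (v i) : ℝ) : ℂ) := by
    simp only [dotProduct, Pi.star_apply, hw, Complex.ofReal_sum]
    refine Finset.sum_congr rfl fun i _ => ?_
    simp only [RCLike.star_def, _root_.map_mul, Complex.conj_ofReal]
    rw [mul_assoc, ← Complex.normSq_eq_conj_mul_self]
    push_cast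
    ring
  set t : ℝ := ∑ i, d i * Complex.normSq (v i) with ht
  have htpos : 0 < t := by
    obtain ⟨i, hi⟩ : ∃ i, v i ≠ 0 := by
      by_contra h
      push_neg at h
      exact hv (funext h)
    refine Finset.sum_pos' (fun j _ => ?_) ⟨i, Finset.mem_univ i, ?_⟩
    · exact mul_nonneg (hd j).le (Complex.normSq_nonneg _)
    · exact mul_pos (hd i) (Complex.normSq_pos.mpr hi)
  have hq : star w ⬝ᵥ ((M.map (fun t : ℝ => (t : ℂ))) *ᵥ w) = μ * t := by
    rw [heq, dotProduct_smul, hsw]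
    simp [smul_eq_mul]
  -- take real parts
  have hre : μ.re * t = (fun i => (w i).re) ⬝ᵥ M *ᵥ (fun i => (w i).re) +
      (fun i => (w i).im) ⬝ᵥ M *ᵥ (fun i => (w i).im) := by
    rw [← quad_re, hq]
    simp [Complex.mul_re]
  have hab : (fun i => (w i).re) ≠ 0 ∨ (fun i => (w i).im) ≠ 0 := by
    by_contra h
    push_neg at h
    apply hwne
    funext i
    have h1 := congrFun h.1 i
    have h2 := congrFun h.2 i
    simp only [Pi.zero_apply] at h1 h2
    exact Complex.ext h1 h2
  have hpos : 0 < μ.re * t := by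
    rw [hre]
    rcases hab with h | h
    · have := hquad _ h
      have := hquad0 (fun i => (w i).im)
      linarith
    · have := hquad _ h
      have := hquad0 (fun i => (w i).re)
      linarith
  nlinarith [hpos, htpos]
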